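/- If X and X' are i.i.d. with distribution F, Y and Y' i.i.d. with distribution G, all four independent, and all have finite first moments, then the squared energy distance 2E‖X−Y‖ − E‖X−X'‖ − E‖Y−Y'‖ is nonnegative, and it equals 0 when F = G. -/

import Mathlib

open MeasureTheory ProbabilityTheory


open MeasureTheory ProbabilityTheory Real Set Metric
open scoped RealInnerProductSpace ENNReal

noncomputable section

namespace EnergyAux

abbrev Ed (d : ℕ) := EuclideanSpace ℝ (Fin d)

/-- bounding kernel -/
def bfun (d : ℕ) (t : Ed d) : ℝ := min 2 (‖t‖ ^ 2) / ‖t‖ ^ (d + 1)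

/-- the kernel whose integral is `Cd * ‖v‖` -/
def kfun (d : ℕ) (v t : Ed d) : ℝ := (1 - Real.cos ⟪t, v⟫) / ‖t‖ ^ (d + 1)

def unitv (n : ℕ) : Ed (n + 1) := EuclideanSpace.single 0 1

def Cd (n : ℕ) : ℝ := ∫ t : Ed (n + 1), kfun (n + 1) (unitv n) t

lemma one_sub_cos_nonneg (x : ℝ) : 0 ≤ 1 - Real.cos x := by
  nlinarith [Real.cos_le_one x]

lemma one_sub_cos_le (x : ℝ) : 1 - Real.cos x ≤ min 2 (x ^ 2) := by
  refine le_min (by nlinarith [Real.neg_one_le_cos x]) ?_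
  have h1 := Real.sin_sq_le_sq (x := x / 2)
  have h2 := Real.sin_sq_eq_half_sub (x / 2)
  have : 2 * (x / 2) = x := by ring
  rw [this] at h2
  nlinarith

lemma kfun_nonneg (d : ℕ) (v t : Ed d) : 0 ≤ kfun d v t :=
  div_nonneg (one_sub_cos_nonneg _) (by positivity)

lemma kfun_le (d : ℕ) (v t : Ed d) :
    kfun d v t ≤ max 1 (‖v‖ ^ 2) * bfun d t := by
  by_cases h : ‖t‖ = 0
  · simp [kfun, bfun, h]
  have hK : (0:ℝ) < ‖t‖ ^ (d + 1) := by positivity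
  have h1 : 1 - Real.cos ⟪t, v⟫ ≤ max 1 (‖v‖ ^ 2) * min 2 (‖t‖ ^ 2) := by
    have hinner : ⟪t, v⟫ ^ 2 ≤ max 1 (‖v‖ ^ 2) * ‖t‖ ^ 2 := by
      have h2 := abs_real_inner_le_norm t v
      have h3 : ⟪t, v⟫ ^ 2 ≤ (‖t‖ * ‖v‖) ^ 2 := by
        rw [← sq_abs]; exact pow_le_pow_left₀ (abs_nonneg _) h2 2
      have h4 := le_max_right 1 (‖v‖ ^ 2)
      nlinarith [sq_nonneg ‖t‖]
    have hM : (1 : ℝ) ≤ max 1 (‖v‖ ^ 2) := le_max_left _ _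
    calc 1 - Real.cos ⟪t, v⟫ ≤ min 2 (⟪t, v⟫ ^ 2) := one_sub_cos_le _
      _ ≤ min (max 1 (‖v‖ ^ 2) * 2) (max 1 (‖v‖ ^ 2) * ‖t‖ ^ 2) :=
          min_le_min (by nlinarith) hinner
      _ = max 1 (‖v‖ ^ 2) * min 2 (‖t‖ ^ 2) := by
          rw [← mul_min_of_nonneg _ _ (by positivity : (0:ℝ) ≤ max 1 (‖v‖ ^ 2))]
  unfold kfun bfun
  rw [mul_div_assoc']
  exact div_le_div_of_nonneg_right h1 hK.le |>.trans_eq rfl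

lemma bfun_measurable (d : ℕ) : Measurable (bfun d) := by
  unfold bfun
  exact ((measurable_const.min ((measurable_norm).pow_const 2)).div
    ((measurable_norm).pow_const (d + 1)))

lemma kfun_measurable_pair {α : Type*} [MeasurableSpace α] {d : ℕ} {V : α → Ed d}
    (hV : Measurable V) : Measurable (fun p : α × Ed d => kfun d (V p.1) p.2) := by
  unfold kfun
  have h1 : Measurable fun p : α × Ed d => ⟪p.2, V p.1⟫ :=
    (measurable_snd.inner (hV.comp measurable_fst))
  exact ((measurable_const.sub h1.cos).div ((measurable_norm.comp measurable_snd).pow_const _))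

lemma kfun_measurable (d : ℕ) (v : Ed d) : Measurable (kfun d v) := by
  unfold kfun
  have h1 : Measurable fun t : Ed d => ⟪t, v⟫ := measurable_id.inner measurable_const
  exact (measurable_const.sub h1.cos).div (measurable_norm.pow_const _)

/-- integrability of the bounding kernel, the hard analytic input -/
lemma bfun_integrable (n : ℕ) : Integrable (bfun (n + 1)) := by
  have hnn : ∀ t : Ed (n + 1), 0 ≤ bfun (n + 1) t := fun t =>
    div_nonneg (le_min (by norm_num) (by positivity)) (by positivity)
  refine ⟨(bfun_measurable _).aestronglyMeasurable, ?_⟩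
  rw [hasFiniteIntegral_iff_norm]
  set F : Ed (n + 1) → ℝ≥0∞ := fun t => ENNReal.ofReal (bfun (n + 1) t) with hF
  have hFeq : (fun t => ENNReal.ofReal ‖bfun (n + 1) t‖) = F := by
    funext t; rw [Real.norm_of_nonneg (hnn t)]
  rw [hFeq]
  set g : sphere (0 : Ed (n + 1)) 1 × Set.Ioi (0 : ℝ) → ℝ≥0∞ :=
    fun p => ENNReal.ofReal (min 2 ((p.2 : ℝ) ^ 2) / (p.2 : ℝ) ^ (n + 2)) with hgdef
  have hsnd : Measurable fun p : sphere (0 : Ed (n + 1)) 1 × Set.Ioi (0 : ℝ) => (p.2 : ℝ) :=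
    measurable_subtype_coe.comp measurable_snd
  have hgmeas : Measurable g :=
    ((measurable_const.min (hsnd.pow_const 2)).div (hsnd.pow_const (n + 2))).ennreal_ofReal
  have hdim : Module.finrank ℝ (Ed (n + 1)) - 1 = n := by
    rw [finrank_euclideanSpace_fin]; omega
  have step1 : ∫⁻ t, F t = ∫⁻ t in ({0}ᶜ : Set (Ed (n + 1))), F t := by
    rw [MeasureTheory.restrict_compl_singleton]
  have step2 : ∫⁻ t in ({0}ᶜ : Set (Ed (n + 1))), F t
      = ∫⁻ x : ({0}ᶜ : Set (Ed (n + 1))), F x ∂(volume.comap Subtype.val) := by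
    rw [lintegral_subtype_comap (measurableSet_singleton 0).compl]
  have step3 : ∫⁻ x : ({0}ᶜ : Set (Ed (n + 1))), F x ∂(volume.comap Subtype.val)
      = ∫⁻ p, g p ∂((volume : Measure (Ed (n + 1))).toSphere.prod (Measure.volumeIoiPow n)) := by
    have hmp := (Measure.measurePreserving_homeomorphUnitSphereProd
      (volume : Measure (Ed (n + 1)))).lintegral_comp hgmeas
    rw [hdim] at hmp
    rw [← hmp]
    refine lintegral_congr fun x => ?_
    have hx : ((homeomorphUnitSphereProd (Ed (n + 1)) x).2 : ℝ) = ‖(x : Ed (n + 1))‖ := by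
      simp
    rw [hgdef]
    simp only [hx]
    rfl
  have step4 : ∫⁻ p, g p ∂((volume : Measure (Ed (n + 1))).toSphere.prod (Measure.volumeIoiPow n))
      = (∫⁻ r : Set.Ioi (0 : ℝ),
          ENNReal.ofReal (min 2 ((r : ℝ) ^ 2) / (r : ℝ) ^ (n + 2)) ∂(Measure.volumeIoiPow n))
        * (volume : Measure (Ed (n + 1))).toSphere Set.univ := by
    rw [lintegral_prod g hgmeas.aemeasurable]
    simp only [hgdef]
    rw [lintegral_const]
  have step5 : (∫⁻ r : Set.Ioi (0 : ℝ),
      ENNReal.ofReal (min 2 ((r : ℝ) ^ 2) / (r : ℝ) ^ (n + 2)) ∂(Measure.volumeIoiPow n))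
      = ∫⁻ r in Set.Ioi (0 : ℝ),
          ENNReal.ofReal (r ^ n) * ENNReal.ofReal (min 2 (r ^ 2) / r ^ (n + 2)) := by
    rw [Measure.volumeIoiPow]
    rw [lintegral_withDensity_eq_lintegral_mul _
      ((measurable_subtype_coe.pow_const n).ennreal_ofReal)
      (show Measurable fun r : Set.Ioi (0 : ℝ) =>
        ENNReal.ofReal (min 2 ((r : ℝ) ^ 2) / (r : ℝ) ^ (n + 2)) from
        ((measurable_const.min (measurable_subtype_coe.pow_const 2)).div
        (measurable_subtype_coe.pow_const (n + 2))).ennreal_ofReal)]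
    rw [← lintegral_subtype_comap measurableSet_Ioi
      (fun r : ℝ => ENNReal.ofReal (r ^ n) * ENNReal.ofReal (min 2 (r ^ 2) / r ^ (n + 2)))]
    rfl
  have step6 : (∫⁻ r in Set.Ioi (0 : ℝ),
      ENNReal.ofReal (r ^ n) * ENNReal.ofReal (min 2 (r ^ 2) / r ^ (n + 2)))
      ≤ ∫⁻ r, ENNReal.ofReal (4 * (1 + r ^ 2)⁻¹) := by
    have hstep : (∫⁻ r in Set.Ioi (0 : ℝ),
        ENNReal.ofReal (r ^ n) * ENNReal.ofReal (min 2 (r ^ 2) / r ^ (n + 2)))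
        ≤ ∫⁻ r in Set.Ioi (0 : ℝ), ENNReal.ofReal (4 * (1 + r ^ 2)⁻¹) := ?_
    · exact hstep.trans (setLIntegral_le_lintegral _ _)
    refine lintegral_mono_ae ?_
    filter_upwards [ae_restrict_mem measurableSet_Ioi] with r hr
    have hr0 : (0:ℝ) < r := hr
    rw [← ENNReal.ofReal_mul (by positivity)]
    refine ENNReal.ofReal_le_ofReal ?_
    have hkey : r ^ n * (min 2 (r ^ 2) / r ^ (n + 2)) = min 2 (r ^ 2) / r ^ 2 := by
      rw [pow_add]
      field_simp
    have h1 := min_le_left 2 (r ^ 2)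
    have h2 := min_le_right 2 (r ^ 2)
    have h3 : (0:ℝ) ≤ min 2 (r ^ 2) := le_min (by norm_num) (by positivity)
    have h4 : (0:ℝ) < 1 + r ^ 2 := by positivity
    rw [hkey, show (4:ℝ) * (1 + r ^ 2)⁻¹ = 4 / (1 + r ^ 2) by ring,
      div_le_div_iff₀ (by positivity) h4]
    nlinarith
  have hfin : (∫⁻ r, ENNReal.ofReal (4 * (1 + r ^ 2)⁻¹)) < ⊤ := by
    have hi : Integrable (fun r : ℝ => 4 * (1 + r ^ 2)⁻¹) :=
      integrable_inv_one_add_sq.const_mul 4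
    refine lt_of_le_of_lt (lintegral_mono fun r => Real.ofReal_le_enorm _) ?_
    exact hi.2
  rw [step1, step2, step3, step4, step5]
  exact ENNReal.mul_lt_top (lt_of_le_of_lt step6 hfin) (measure_lt_top _ _)


lemma kfun_integrable (n : ℕ) (v : Ed (n + 1)) : Integrable (kfun (n + 1) v) := by
  refine Integrable.mono' ((bfun_integrable n).const_mul (max 1 (‖v‖ ^ 2)))
    (kfun_measurable _ v).aestronglyMeasurable ?_
  refine ae_of_all _ fun t => ?_
  rw [Real.norm_of_nonneg (kfun_nonneg _ _ _)]
  exact kfun_le _ v t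

lemma norm_unitv (n : ℕ) : ‖unitv n‖ = 1 := by
  simp [unitv, EuclideanSpace.norm_single]

/-- scaling + rotation: `∫ kfun v = Cd * ‖v‖`. -/
lemma kfun_integral (n : ℕ) (v : Ed (n + 1)) :
    ∫ t, kfun (n + 1) v t = Cd n * ‖v‖ := by
  rcases eq_or_ne v 0 with rfl | hv
  · simp [kfun]
  set c := ‖v‖ with hc
  have hc0 : 0 < c := norm_pos_iff.2 hv
  -- an orthonormal basis whose first vector is `c⁻¹ • v`
  obtain ⟨b, hb⟩ : ∃ b : OrthonormalBasis (Fin (n + 1)) ℝ (Ed (n + 1)), b 0 = c⁻¹ • v := by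
    have horth : Orthonormal ℝ (({0} : Set (Fin (n + 1))).restrict fun _ => c⁻¹ • v) := by
      constructor
      · rintro ⟨i, hi⟩
        show ‖c⁻¹ • v‖ = 1
        rw [norm_smul, Real.norm_eq_abs, abs_inv, abs_of_pos hc0]
        exact inv_mul_cancel₀ hc0.ne' 
      · rintro ⟨i, hi⟩ ⟨j, hj⟩ hij
        exact absurd (Subtype.ext (hi.trans hj.symm)) hij
    obtain ⟨b, hb⟩ := horth.exists_orthonormalBasis_extension_of_card_eq
      (by simp [finrank_euclideanSpace_fin])
    exact ⟨b, hb 0 rfl⟩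
  set O : Ed (n + 1) ≃ₗᵢ[ℝ] Ed (n + 1) := b.repr.symm with hO
  have hOu : O (unitv n) = c⁻¹ • v := by
    rw [hO, unitv, OrthonormalBasis.repr_symm_single, hb]
  have step1 : ∫ t, kfun (n + 1) v t = ∫ s, kfun (n + 1) v (O s) :=
    (MeasureTheory.integral_comp O (kfun (n + 1) v)).symm
  have hg : ∀ s : Ed (n + 1), kfun (n + 1) v (O s)
      = c ^ (n + 2) * kfun (n + 1) (unitv n) (c • s) := by
    intro s
    have hinner : ⟪O s, v⟫ = c * ⟪s, unitv n⟫ := by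
      have hv2 : v = c • (c⁻¹ • v) := by rw [smul_smul, mul_inv_cancel₀ hc0.ne', one_smul]
      calc ⟪O s, v⟫ = ⟪O s, c • (c⁻¹ • v)⟫ := by rw [← hv2]
        _ = c * ⟪O s, O (unitv n)⟫ := by rw [hOu, real_inner_smul_right]
        _ = c * ⟪s, unitv n⟫ := by rw [O.inner_map_map]
    have hnorm : ‖O s‖ = ‖s‖ := O.norm_map s
    have hinner2 : ⟪c • s, unitv n⟫ = c * ⟪s, unitv n⟫ := real_inner_smul_left _ _ _
    have hnorm2 : ‖c • s‖ = c * ‖s‖ := by rw [norm_smul, Real.norm_of_nonneg hc0.le]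
    unfold kfun
    rw [hinner, hnorm, hinner2, hnorm2, mul_pow]
    by_cases hs : ‖s‖ = 0
    · simp [hs]
    · have h1 : (0:ℝ) < ‖s‖ ^ (n + 1 + 1) := by positivity
      have h2 : (0:ℝ) < c ^ (n + 1 + 1) := by positivity
      field_simp
  rw [step1]
  simp_rw [hg]
  rw [MeasureTheory.integral_const_mul]
  have hsc := MeasureTheory.Measure.integral_comp_smul
    (volume (α := Ed (n + 1))) (kfun (n + 1) (unitv n)) c
  rw [finrank_euclideanSpace_fin] at hsc
  rw [hsc, smul_eq_mul, abs_of_pos (inv_pos.2 (by positivity : (0:ℝ) < c ^ (n+1)))]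
  rw [show (∫ t, kfun (n + 1) (unitv n) t) = Cd n from rfl]
  field_simp
  ring

lemma Cd_nonneg (n : ℕ) : 0 ≤ Cd n :=
  integral_nonneg fun t => kfun_nonneg _ _ t

lemma Cd_pos (n : ℕ) : 0 < Cd n := by
  rcases (Cd_nonneg n).lt_or_eq with h | h
  · exact h
  exfalso
  have hint := kfun_integrable n (unitv n)
  have hzero : kfun (n + 1) (unitv n) =ᵐ[volume] 0 :=
    (integral_eq_zero_iff_of_nonneg (fun t => kfun_nonneg _ _ t) hint).1 h.symm
  -- the set where the kernel is positive
  set U : Set (Ed (n + 1)) :=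
    {t | t ≠ 0} ∩ (kfun (n + 1) (unitv n)) ⁻¹' Set.Ioi 0 with hU
  have hopen : IsOpen U := by
    have hcont : ContinuousOn (kfun (n + 1) (unitv n)) {t | t ≠ 0} := by
      apply ContinuousOn.div
      · exact (continuous_const.sub (Real.continuous_cos.comp (continuous_id.inner continuous_const))).continuousOn
      · exact (continuous_norm.pow _).continuousOn
      · intro t ht
        exact pow_ne_zero _ (norm_ne_zero_iff.2 ht)
    exact hcont.isOpen_inter_preimage isOpen_compl_singleton isOpen_Ioi
  have hne : U.Nonempty := by
    refine ⟨(π : ℝ) • unitv n, ?_, ?_⟩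
    · intro h0
      have h3 := congrArg norm h0
      rw [norm_smul, norm_unitv, norm_zero, mul_one, Real.norm_of_nonneg Real.pi_pos.le] at h3
      exact Real.pi_ne_zero h3
    · show 0 < kfun (n + 1) (unitv n) ((π : ℝ) • unitv n)
      have h1 : ⟪(π : ℝ) • unitv n, unitv n⟫ = π := by
        rw [real_inner_smul_left, real_inner_self_eq_norm_sq, norm_unitv]
        ring
      have h2 : ‖(π : ℝ) • unitv n‖ = π := by
        rw [norm_smul, norm_unitv, mul_one, Real.norm_of_nonneg Real.pi_pos.le]
      unfold kfun
      rw [h1, h2, Real.cos_pi]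
      positivity
  have hpos : 0 < volume U := hopen.measure_pos volume hne
  have hsub : U ⊆ {t | kfun (n + 1) (unitv n) t ≠ 0} := by
    rintro t ⟨-, ht⟩
    exact ne_of_gt ht
  have hnull : volume {t | kfun (n + 1) (unitv n) t ≠ 0} = 0 := by
    have h4 := hzero
    rw [Filter.EventuallyEq, ae_iff] at h4
    simpa using h4
  exact absurd (measure_mono_null hsub hnull) hpos.ne'



section Prob
set_option maxHeartbeats 1000000

variable {Ω : Type*} [MeasurableSpace Ω] {μ : Measure Ω} [IsProbabilityMeasure μ]

lemma integrable_cos_inner {n : ℕ} (t : Ed n) {A : Ω → Ed n} (hA : Measurable A) :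
    Integrable (fun ω => Real.cos ⟪t, A ω⟫) μ := by
  refine Integrable.mono' (integrable_const 1)
    ((Real.measurable_cos.comp (measurable_const.inner hA)).aestronglyMeasurable)
    (ae_of_all _ fun ω => ?_)
  rw [Real.norm_eq_abs]
  exact Real.abs_cos_le_one _

lemma integrable_sin_inner {n : ℕ} (t : Ed n) {A : Ω → Ed n} (hA : Measurable A) :
    Integrable (fun ω => Real.sin ⟪t, A ω⟫) μ := by
  refine Integrable.mono' (integrable_const 1)
    ((Real.measurable_sin.comp (measurable_const.inner hA)).aestronglyMeasurable)
    (ae_of_all _ fun ω => ?_)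
  rw [Real.norm_eq_abs]
  exact Real.abs_sin_le_one _

lemma integrable_norm_sub {n : ℕ} {A B : Ω → Ed n} (hA : Measurable A) (hB : Measurable B)
    (hAi : Integrable (fun ω => ‖A ω‖) μ) (hBi : Integrable (fun ω => ‖B ω‖) μ) :
    Integrable (fun ω => ‖A ω - B ω‖) μ := by
  refine Integrable.mono' (hAi.add hBi) ((hA.sub hB).norm.aestronglyMeasurable)
    (ae_of_all _ fun ω => ?_)
  rw [norm_norm]
  exact norm_sub_le _ _

lemma pair_integrable (n : ℕ) {A B : Ω → Ed (n + 1)} (hA : Measurable A) (hB : Measurable B)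
    (hAi : Integrable (fun ω => ‖A ω‖) μ) (hBi : Integrable (fun ω => ‖B ω‖) μ) :
    Integrable (fun p : Ω × Ed (n + 1) => kfun (n + 1) (A p.1 - B p.1) p.2) (μ.prod volume) := by
  have hm : Measurable fun p : Ω × Ed (n + 1) => kfun (n + 1) (A p.1 - B p.1) p.2 := by
    unfold kfun
    have h1 : Measurable fun p : Ω × Ed (n + 1) => ⟪p.2, A p.1 - B p.1⟫ :=
      measurable_snd.inner ((hA.comp measurable_fst).sub (hB.comp measurable_fst))
    exact (measurable_const.sub (Real.measurable_cos.comp h1)).div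
      ((measurable_norm.comp measurable_snd).pow_const _)
  rw [integrable_prod_iff hm.aestronglyMeasurable]
  constructor
  · exact ae_of_all _ fun ω => kfun_integrable n (A ω - B ω)
  · refine (Integrable.congr ((integrable_norm_sub hA hB hAi hBi).const_mul (Cd n))
      (ae_of_all _ fun ω => ?_))
    show Cd n * ‖A ω - B ω‖ = ∫ t, ‖kfun (n + 1) (A ω - B ω) t‖
    rw [← kfun_integral n (A ω - B ω)]
    exact integral_congr_ae (ae_of_all _ fun t =>
      (Real.norm_of_nonneg (kfun_nonneg (n + 1) (A ω - B ω) t)).symm)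

lemma pair_eq (n : ℕ) {A B : Ω → Ed (n + 1)} (hA : Measurable A) (hB : Measurable B)
    (hAi : Integrable (fun ω => ‖A ω‖) μ) (hBi : Integrable (fun ω => ‖B ω‖) μ) :
    Cd n * ∫ ω, ‖A ω - B ω‖ ∂μ = ∫ t, ∫ ω, kfun (n + 1) (A ω - B ω) t ∂μ := by
  have hint := pair_integrable n hA hB hAi hBi
  calc Cd n * ∫ ω, ‖A ω - B ω‖ ∂μ = ∫ ω, Cd n * ‖A ω - B ω‖ ∂μ := by
        rw [integral_const_mul]
    _ = ∫ ω, ∫ t, kfun (n + 1) (A ω - B ω) t ∂(volume) ∂μ := by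
        refine integral_congr_ae (ae_of_all _ fun ω => ?_)
        show Cd n * ‖A ω - B ω‖ = ∫ t, kfun (n + 1) (A ω - B ω) t
        rw [kfun_integral n (A ω - B ω)]
    _ = ∫ t, ∫ ω, kfun (n + 1) (A ω - B ω) t ∂μ := integral_integral_swap hint

lemma char_expand {n : ℕ} {A B : Ω → Ed n} (hA : Measurable A) (hB : Measurable B)
    (hAB : IndepFun A B μ) (t : Ed n) :
    ∫ ω, (1 - Real.cos ⟪t, A ω - B ω⟫) ∂μ
      = 1 - ((∫ ω, Real.cos ⟪t, A ω⟫ ∂μ) * (∫ ω, Real.cos ⟪t, B ω⟫ ∂μ)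
            + (∫ ω, Real.sin ⟪t, A ω⟫ ∂μ) * (∫ ω, Real.sin ⟪t, B ω⟫ ∂μ)) := by
  have hpt : ∀ ω, (1 - Real.cos ⟪t, A ω - B ω⟫)
      = 1 - (Real.cos ⟪t, A ω⟫ * Real.cos ⟪t, B ω⟫ + Real.sin ⟪t, A ω⟫ * Real.sin ⟪t, B ω⟫) := by
    intro ω
    rw [inner_sub_right, Real.cos_sub]
  rw [integral_congr_ae (ae_of_all _ hpt)]
  have hcc : Integrable (fun ω => Real.cos ⟪t, A ω⟫ * Real.cos ⟪t, B ω⟫) μ :=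
    (integrable_cos_inner t hB).bdd_mul
      ((Real.measurable_cos.comp (measurable_const.inner hA)).aestronglyMeasurable)
      (ae_of_all _ fun ω => by rw [Real.norm_eq_abs]; exact Real.abs_cos_le_one _)
  have hss : Integrable (fun ω => Real.sin ⟪t, A ω⟫ * Real.sin ⟪t, B ω⟫) μ :=
    (integrable_sin_inner t hB).bdd_mul
      ((Real.measurable_sin.comp (measurable_const.inner hA)).aestronglyMeasurable)
      (ae_of_all _ fun ω => by rw [Real.norm_eq_abs]; exact Real.abs_sin_le_one _)
  have hsum : Integrable (fun ω => Real.cos ⟪t, A ω⟫ * Real.cos ⟪t, B ω⟫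
      + Real.sin ⟪t, A ω⟫ * Real.sin ⟪t, B ω⟫) μ := hcc.add hss
  rw [integral_sub (integrable_const 1) hsum, integral_const, integral_add hcc hss]
  have hu : Measurable fun x : Ed n => Real.cos ⟪t, x⟫ :=
    Real.measurable_cos.comp (measurable_const.inner measurable_id)
  have hv : Measurable fun x : Ed n => Real.sin ⟪t, x⟫ :=
    Real.measurable_sin.comp (measurable_const.inner measurable_id)
  have hICC : ∫ ω, Real.cos ⟪t, A ω⟫ * Real.cos ⟪t, B ω⟫ ∂μ
      = (∫ ω, Real.cos ⟪t, A ω⟫ ∂μ) * ∫ ω, Real.cos ⟪t, B ω⟫ ∂μ := by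
    have h2 := (hAB.comp hu hu).integral_mul_eq_mul_integral
      ((Real.measurable_cos.comp (measurable_const.inner hA)).aestronglyMeasurable)
      ((Real.measurable_cos.comp (measurable_const.inner hB)).aestronglyMeasurable)
    simpa [Function.comp] using h2
  have hISS : ∫ ω, Real.sin ⟪t, A ω⟫ * Real.sin ⟪t, B ω⟫ ∂μ
      = (∫ ω, Real.sin ⟪t, A ω⟫ ∂μ) * ∫ ω, Real.sin ⟪t, B ω⟫ ∂μ := by
    have h2 := (hAB.comp hv hv).integral_mul_eq_mul_integral
      ((Real.measurable_sin.comp (measurable_const.inner hA)).aestronglyMeasurable)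
      ((Real.measurable_sin.comp (measurable_const.inner hB)).aestronglyMeasurable)
    simpa [Function.comp] using h2
  rw [hICC, hISS]
  simp

lemma expect_norm_sub_eq {n : ℕ} {A B : Ω → Ed n} (hA : Measurable A) (hB : Measurable B)
    (hAB : IndepFun A B μ) :
    ∫ ω, ‖A ω - B ω‖ ∂μ = ∫ p : Ed n × Ed n, ‖p.1 - p.2‖ ∂((μ.map A).prod (μ.map B)) := by
  have hmap : μ.map (fun ω => (A ω, B ω)) = (μ.map A).prod (μ.map B) :=
    (indepFun_iff_map_prod_eq_prod_map_map hA.aemeasurable hB.aemeasurable).1 hAB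
  rw [← hmap]
  rw [integral_map (hA.prodMk hB).aemeasurable
    (Continuous.aestronglyMeasurable (by continuity))]

end Prob

end EnergyAux
end

open MeasureTheory ProbabilityTheory EnergyAux in
set_option maxHeartbeats 1000000 in
/-- If `X, X'` are i.i.d. with law `F`, `Y, Y'` i.i.d. with law `G`, all four independent
with finite first moments, then the squared energy distance
`2 E‖X - Y‖ - E‖X - X'‖ - E‖Y - Y'‖` is nonnegative, and it equals `0` when `F = G`. -/
theorem energy_distance_nonneg_and_vanishes
    {Ω : Type*} [MeasurableSpace Ω] (μ : Measure Ω) [IsProbabilityMeasure μ]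
    (d : ℕ) (X X' Y Y' : Ω → EuclideanSpace ℝ (Fin d))
    (hX : Measurable X) (hX' : Measurable X') (hY : Measurable Y) (hY' : Measurable Y')
    (hXX' : IdentDistrib X X' μ μ) (hYY' : IdentDistrib Y Y' μ μ)
    (hindep : iIndepFun ![X, X', Y, Y'] μ)
    (hXint : Integrable (fun ω => ‖X ω‖) μ) (hX'int : Integrable (fun ω => ‖X' ω‖) μ)
    (hYint : Integrable (fun ω => ‖Y ω‖) μ) (hY'int : Integrable (fun ω => ‖Y' ω‖) μ) :
    0 ≤ 2 * (∫ ω, ‖X ω - Y ω‖ ∂μ) - (∫ ω, ‖X ω - X' ω‖ ∂μ) - (∫ ω, ‖Y ω - Y' ω‖ ∂μ) ∧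
    (μ.map X = μ.map Y →
      2 * (∫ ω, ‖X ω - Y ω‖ ∂μ) - (∫ ω, ‖X ω - X' ω‖ ∂μ) - (∫ ω, ‖Y ω - Y' ω‖ ∂μ) = 0) := by
  have hIXY : IndepFun X Y μ := by
    have h := hindep.indepFun (i := 0) (j := 2) (by decide)
    simpa using h
  have hIXX' : IndepFun X X' μ := by
    have h := hindep.indepFun (i := 0) (j := 1) (by decide)
    simpa using h
  have hIYY' : IndepFun Y Y' μ := by
    have h := hindep.indepFun (i := 2) (j := 3) (by decide)
    simpa using h
  constructor
  · -- nonnegativity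
    rcases Nat.eq_zero_or_pos d with rfl | hd
    · have hz : ∀ v : EuclideanSpace ℝ (Fin 0), ‖v‖ = 0 := fun v => by
        simp [EuclideanSpace.norm_eq]
      simp [hz]
    · obtain ⟨n, rfl⟩ : ∃ n, d = n + 1 := ⟨d - 1, by omega⟩
      set SXY := ∫ ω, ‖X ω - Y ω‖ ∂μ with hSXY
      set SXX := ∫ ω, ‖X ω - X' ω‖ ∂μ with hSXX
      set SYY := ∫ ω, ‖Y ω - Y' ω‖ ∂μ with hSYY
      have e1 := pair_eq (μ := μ) n hX hY hXint hYint
      have e2 := pair_eq (μ := μ) n hX hX' hXint hX'int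
      have e3 := pair_eq (μ := μ) n hY hY' hYint hY'int
      have i1 : Integrable (fun t => ∫ ω, kfun (n + 1) (X ω - Y ω) t ∂μ) :=
        (pair_integrable (μ := μ) n hX hY hXint hYint).integral_prod_right
      have i2 : Integrable (fun t => ∫ ω, kfun (n + 1) (X ω - X' ω) t ∂μ) :=
        (pair_integrable (μ := μ) n hX hX' hXint hX'int).integral_prod_right
      have i3 : Integrable (fun t => ∫ ω, kfun (n + 1) (Y ω - Y' ω) t ∂μ) :=
        (pair_integrable (μ := μ) n hY hY' hYint hY'int).integral_prod_right
      have key : Cd n * (2 * SXY - SXX - SYY)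
          = ∫ t, (2 * (∫ ω, kfun (n + 1) (X ω - Y ω) t ∂μ)
              - (∫ ω, kfun (n + 1) (X ω - X' ω) t ∂μ)
              - (∫ ω, kfun (n + 1) (Y ω - Y' ω) t ∂μ)) := by
        have i1c : Integrable (fun t => 2 * ∫ ω, kfun (n + 1) (X ω - Y ω) t ∂μ) := by
          exact i1.const_mul 2
        have i12 : Integrable (fun t => 2 * (∫ ω, kfun (n + 1) (X ω - Y ω) t ∂μ)
            - ∫ ω, kfun (n + 1) (X ω - X' ω) t ∂μ) := by
          exact i1c.sub i2
        rw [integral_sub i12 i3, integral_sub i1c i2, integral_const_mul]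
        rw [← e1, ← e2, ← e3]
        ring
      have hptnn : ∀ t : Ed (n + 1),
          0 ≤ 2 * (∫ ω, kfun (n + 1) (X ω - Y ω) t ∂μ)
              - (∫ ω, kfun (n + 1) (X ω - X' ω) t ∂μ)
              - (∫ ω, kfun (n + 1) (Y ω - Y' ω) t ∂μ) := by
        intro t
        have hdiv : ∀ A B : Ω → Ed (n + 1),
            ∫ ω, kfun (n + 1) (A ω - B ω) t ∂μ
              = (∫ ω, (1 - Real.cos ⟪t, A ω - B ω⟫) ∂μ) / ‖t‖ ^ (n + 1 + 1) := by
          intro A B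
          rw [← integral_div]
          rfl
        rw [hdiv X Y, hdiv X X', hdiv Y Y',
          char_expand hX hY hIXY t, char_expand hX hX' hIXX' t, char_expand hY hY' hIYY' t]
        have hucos : Measurable fun x : Ed (n + 1) => Real.cos ⟪t, x⟫ :=
          Real.measurable_cos.comp (measurable_const.inner measurable_id)
        have husin : Measurable fun x : Ed (n + 1) => Real.sin ⟪t, x⟫ :=
          Real.measurable_sin.comp (measurable_const.inner measurable_id)
        have haX : ∫ ω, Real.cos ⟪t, X' ω⟫ ∂μ = ∫ ω, Real.cos ⟪t, X ω⟫ ∂μ := by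
          have h := (hXX'.comp hucos).integral_eq
          simpa [Function.comp] using h.symm
        have hbX : ∫ ω, Real.sin ⟪t, X' ω⟫ ∂μ = ∫ ω, Real.sin ⟪t, X ω⟫ ∂μ := by
          have h := (hXX'.comp husin).integral_eq
          simpa [Function.comp] using h.symm
        have haY : ∫ ω, Real.cos ⟪t, Y' ω⟫ ∂μ = ∫ ω, Real.cos ⟪t, Y ω⟫ ∂μ := by
          have h := (hYY'.comp hucos).integral_eq
          simpa [Function.comp] using h.symm
        have hbY : ∫ ω, Real.sin ⟪t, Y' ω⟫ ∂μ = ∫ ω, Real.sin ⟪t, Y ω⟫ ∂μ := by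
          have h := (hYY'.comp husin).integral_eq
          simpa [Function.comp] using h.symm
        rw [haX, hbX, haY, hbY]
        set aX := ∫ ω, Real.cos ⟪t, X ω⟫ ∂μ
        set bX := ∫ ω, Real.sin ⟪t, X ω⟫ ∂μ
        set aY := ∫ ω, Real.cos ⟪t, Y ω⟫ ∂μ
        set bY := ∫ ω, Real.sin ⟪t, Y ω⟫ ∂μ
        set K := ‖t‖ ^ (n + 1 + 1) with hK
        have hKnn : 0 ≤ K := by positivity
        have hcombine :
            2 * ((1 - (aX * aY + bX * bY)) / K) - (1 - (aX * aX + bX * bX)) / K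
              - (1 - (aY * aY + bY * bY)) / K
            = ((aX - aY) ^ 2 + (bX - bY) ^ 2) / K := by
          rw [mul_div_assoc', ← sub_div, ← sub_div]
          congr 1
          ring
        rw [hcombine]
        positivity
      have hnn : 0 ≤ Cd n * (2 * SXY - SXX - SYY) := by
        rw [key]
        exact integral_nonneg hptnn
      nlinarith [Cd_pos n, hnn]
  · -- vanishing when the two laws agree
    intro h
    rw [expect_norm_sub_eq hX hY hIXY, expect_norm_sub_eq hX hX' hIXX',
      expect_norm_sub_eq hY hY' hIYY', ← hXX'.map_eq, ← hYY'.map_eq, h]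
    ring
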